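/- Let λ: ℤ → ℂ be positive definite with λ(0)=1. Then there exists a probability measure μ on the circle 𝕋 = ℝ/ℤ such that λ(n) = ∫_𝕋 exp(2πi n t) dμ(t) for all n ∈ ℤ. -/

import Mathlib

set_option maxHeartbeats 1000000

open Matrix Complex MeasureTheory Filter Topology Set Function
open scoped ComplexOrder Real

noncomputable section
namespace HerglotzAux


/-- The character `t ↦ e^{2πint}` as a function `ℝ → ℂ`. -/
def eC (n : ℤ) (t : ℝ) : ℂ := Complex.exp (2 * (π : ℂ) * Complex.I * n * t)

lemma eC_mul (a b : ℤ) (t : ℝ) : eC a t * eC b t = eC (a + b) t := by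
  rw [eC, eC, eC, ← Complex.exp_add]
  congr 1
  push_cast
  ring

lemma eC_star (a : ℤ) (t : ℝ) : star (eC a t) = eC (-a) t := by
  rw [eC, eC]
  rw [show (star (Complex.exp (2 * (π:ℂ) * Complex.I * a * t)) : ℂ)
      = (starRingEnd ℂ) (Complex.exp (2 * (π:ℂ) * Complex.I * a * t)) from rfl]
  rw [← Complex.exp_conj]
  congr 1
  simp only [_root_.map_mul, Complex.conj_I, Complex.conj_ofReal, map_ofNat,
    map_intCast]
  push_cast
  ring

lemma eC_norm (a : ℤ) (t : ℝ) : ‖eC a t‖ = 1 := by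
  rw [eC, Complex.norm_exp]
  have : (2 * (π:ℂ) * Complex.I * a * t).re = 0 := by
    simp [Complex.mul_re, Complex.mul_im]
  rw [this, Real.exp_zero]

lemma eC_continuous (a : ℤ) : Continuous (eC a) := by
  unfold eC; fun_prop

lemma eC_zero (t : ℝ) : eC 0 t = 1 := by simp [eC]

lemma integral_eC (m : ℤ) (a : ℝ) :
    (∫ t in a..(a + 1), eC m t) = if m = 0 then 1 else 0 := by
  rcases eq_or_ne m 0 with h | h
  · simp [h, eC_zero]
  · have hc : (2 * (π : ℂ) * Complex.I * m) ≠ 0 := by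
      simp [Real.pi_ne_zero, Complex.I_ne_zero, h]
    have := integral_exp_mul_complex (a := a) (b := a + 1) hc
    have heq : ∀ t : ℝ, eC m t = Complex.exp (2 * (π : ℂ) * Complex.I * m * t) := fun t => rfl
    simp only [eC, this, h, if_neg h]
    have h1 : ((a : ℂ) + 1) = ((a + 1 : ℝ) : ℂ) := by push_cast; ring
    have hexp : Complex.exp (2 * (π : ℂ) * Complex.I * m * ((a : ℝ) + 1 : ℝ))
        = Complex.exp (2 * (π : ℂ) * Complex.I * m * a) := by
      push_cast
      rw [mul_add, Complex.exp_add, mul_one]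
      have : Complex.exp (2 * (π : ℂ) * Complex.I * m) = 1 := by
        have := Complex.exp_int_mul_two_pi_mul_I m
        rw [← this]; ring_nf
      rw [this, mul_one]
    rw [hexp]
    simp



/-- The (unnormalized) Fejér partial sum attached to `lam`. -/
def SS (lam : ℤ → ℂ) (N : ℕ) (t : ℝ) : ℂ :=
  ∑ j : Fin N, ∑ l : Fin N, lam ((j : ℤ) - l) * eC (-(j : ℤ)) t * star (eC (-(l : ℤ)) t)

lemma SS_eq (lam : ℤ → ℂ) (N : ℕ) (t : ℝ) :
    SS lam N t = ∑ j : Fin N, ∑ l : Fin N, lam ((j : ℤ) - l) * eC ((l : ℤ) - j) t := by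
  unfold SS
  refine Finset.sum_congr rfl fun j _ => Finset.sum_congr rfl fun l _ => ?_
  rw [eC_star, mul_assoc, eC_mul, neg_neg]
  congr 2
  ring

lemma SS_continuous (lam : ℤ → ℂ) (N : ℕ) : Continuous (SS lam N) := by
  have : SS lam N = fun t => ∑ j : Fin N, ∑ l : Fin N,
      lam ((j : ℤ) - l) * eC ((l : ℤ) - j) t := funext fun t => SS_eq lam N t
  rw [this]
  exact continuous_finset_sum _ fun j _ => continuous_finset_sum _ fun l _ =>
    continuous_const.mul (eC_continuous _)

lemma card_pairs (N : ℕ) (n : ℤ) (hn : n.natAbs ≤ N) :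
    ((Finset.range N ×ˢ Finset.range N).filter fun p => (p.1 : ℤ) - p.2 = n).card
      = N - n.natAbs := by
  rw [← Finset.card_range (N - n.natAbs)]
  apply Finset.card_bij' (fun p _ => min p.1 p.2)
    (fun k _ => (k + n.toNat, k + (-n).toNat))
  · intro p hp
    simp only [Finset.mem_filter, Finset.mem_product, Finset.mem_range] at hp
    simp only [Finset.mem_range]
    omega
  · intro k hk
    simp only [Finset.mem_range] at hk
    simp only [Finset.mem_filter, Finset.mem_product, Finset.mem_range]
    refine ⟨⟨by omega, by omega⟩, by omega⟩
  · intro p hp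
    simp only [Finset.mem_filter, Finset.mem_product, Finset.mem_range] at hp
    have := hp.2
    ext <;> simp <;> omega
  · intro k hk
    simp only [Finset.mem_range] at hk
    simp
    omega

lemma integral_eC_SS (lam : ℤ → ℂ) (N : ℕ) (n : ℤ) (hn : n.natAbs ≤ N) (a : ℝ) :
    (∫ t in a..(a + 1), eC n t * SS lam N t) = ((N - n.natAbs : ℕ) : ℂ) * lam n := by
  have heq : (fun t : ℝ => eC n t * SS lam N t)
      = fun t => ∑ j : Fin N, ∑ l : Fin N, lam ((j : ℤ) - l) * eC (n + ((l : ℤ) - j)) t := by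
    funext t
    rw [SS_eq, Finset.mul_sum]
    refine Finset.sum_congr rfl fun j _ => ?_
    rw [Finset.mul_sum]
    refine Finset.sum_congr rfl fun l _ => ?_
    rw [← eC_mul n ((l : ℤ) - j) t]
    ring
  have hint : ∀ (m : ℤ) (c : ℂ), IntervalIntegrable (fun t => c * eC m t) volume a (a + 1) :=
    fun m c => (continuous_const.mul (eC_continuous m)).intervalIntegrable _ _
  have hint2 : ∀ j : Fin N, IntervalIntegrable
      (fun t => ∑ l : Fin N, lam ((j : ℤ) - l) * eC (n + ((l : ℤ) - j)) t) volume a (a + 1) :=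
    fun j => (continuous_finset_sum _ fun l _ =>
      continuous_const.mul (eC_continuous _)).intervalIntegrable _ _
  have A : (∫ t in a..(a + 1), ∑ j : Fin N, ∑ l : Fin N,
      lam ((j : ℤ) - l) * eC (n + ((l : ℤ) - j)) t)
      = ∑ j : Fin N, ∫ t in a..(a + 1), ∑ l : Fin N,
          lam ((j : ℤ) - l) * eC (n + ((l : ℤ) - j)) t :=
    intervalIntegral.integral_finset_sum (fun j _ => hint2 j)
  rw [heq, A]
  have h2 : ∀ j : Fin N, (∫ t in a..(a+1), ∑ l : Fin N,
      lam ((j : ℤ) - l) * eC (n + ((l : ℤ) - j)) t)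
      = ∑ l : Fin N, (if (j : ℤ) - l = n then lam n else 0) := by
    intro j
    have B : (∫ t in a..(a + 1), ∑ l : Fin N,
        lam ((j : ℤ) - l) * eC (n + ((l : ℤ) - j)) t)
        = ∑ l : Fin N, ∫ t in a..(a + 1),
            lam ((j : ℤ) - l) * eC (n + ((l : ℤ) - j)) t :=
      intervalIntegral.integral_finset_sum (fun l _ => hint _ _)
    rw [B]
    refine Finset.sum_congr rfl fun l _ => ?_
    rw [intervalIntegral.integral_const_mul, integral_eC]
    rcases eq_or_ne ((j : ℤ) - l) n with h | h
    · rw [if_pos (by omega), if_pos h, ← h, mul_one]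
    · rw [if_neg (by omega), if_neg h, mul_zero]
  rw [Finset.sum_congr rfl fun j _ => h2 j]
  have h3 : (∑ j : Fin N, ∑ l : Fin N, (if (j : ℤ) - l = n then lam n else 0))
      = ∑ p ∈ Finset.range N ×ˢ Finset.range N,
          (if (p.1 : ℤ) - p.2 = n then lam n else 0) := by
    rw [Finset.sum_product]
    rw [← Fin.sum_univ_eq_sum_range]
    refine Finset.sum_congr rfl fun j _ => ?_
    rw [← Fin.sum_univ_eq_sum_range]
  rw [h3, ← Finset.sum_filter, Finset.sum_const, card_pairs N n hn, nsmul_eq_mul]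



variable {lam : ℤ → ℂ}

/-- Positive definiteness hypothesis abbreviation. -/
def PD (lam : ℤ → ℂ) : Prop :=
  ∀ (K : ℕ) (n : Fin K → ℤ) (c : Fin K → ℂ),
    0 ≤ ∑ j, ∑ l, lam (n j - n l) * c j * star (c l)

lemma SS_nonneg (hpd : PD lam) (N : ℕ) (t : ℝ) : 0 ≤ SS lam N t :=
  hpd N (fun j => (j : ℤ)) (fun j => eC (-(j : ℤ)) t)

def fR (lam : ℤ → ℂ) (N : ℕ) (t : ℝ) : ℝ := (SS lam N t).re / N

lemma fR_nonneg (hpd : PD lam) (N : ℕ) (t : ℝ) : 0 ≤ fR lam N t := by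
  have h := SS_nonneg hpd N t
  rw [Complex.le_def] at h
  exact div_nonneg (by simpa using h.1) (Nat.cast_nonneg N)

lemma fR_ofReal (hpd : PD lam) (N : ℕ) (t : ℝ) :
    ((fR lam N t : ℝ) : ℂ) = SS lam N t / N := by
  have h := SS_nonneg hpd N t
  rw [Complex.le_def] at h
  have him : (SS lam N t).im = 0 := h.2.symm
  have hre : ((SS lam N t).re : ℂ) = SS lam N t := by
    exact Complex.ext (by simp) (by simp [him])
  rw [fR]
  push_cast
  rw [hre]

lemma fR_continuous (lam : ℤ → ℂ) (N : ℕ) : Continuous (fR lam N) :=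
  ((Complex.continuous_re.comp (SS_continuous lam N)).div_const _)

lemma fR_intervalIntegrable (lam : ℤ → ℂ) (N : ℕ) (a b : ℝ) :
    IntervalIntegrable (fR lam N) volume a b :=
  (fR_continuous lam N).intervalIntegrable a b

lemma fR_coeff (hpd : PD lam) {N : ℕ} (hN : 0 < N) {n : ℤ} (hn : n.natAbs ≤ N) (a : ℝ) :
    (∫ t in a..(a + 1), eC n t * (fR lam N t : ℂ))
      = (((N - n.natAbs : ℕ) : ℂ) / N) * lam n := by
  have heq : (fun t : ℝ => eC n t * (fR lam N t : ℂ))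
      = fun t => (N : ℂ)⁻¹ * (eC n t * SS lam N t) := by
    funext t
    rw [fR_ofReal hpd]
    field_simp
  rw [heq, intervalIntegral.integral_const_mul, integral_eC_SS lam N n hn a]
  field_simp

def FN (lam : ℤ → ℂ) (N : ℕ) (x : ℝ) : ℝ := ∫ t in (0:ℝ)..x, fR lam N t

lemma FN_zero (lam : ℤ → ℂ) (N : ℕ) : FN lam N 0 = 0 := by
  simp [FN]

lemma FN_diff (lam : ℤ → ℂ) (N : ℕ) (x y : ℝ) :
    FN lam N y - FN lam N x = ∫ t in x..y, fR lam N t := by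
  rw [FN, FN, intervalIntegral.integral_interval_sub_left
    (fR_intervalIntegrable lam N 0 y) (fR_intervalIntegrable lam N 0 x)]

lemma FN_mono (hpd : PD lam) (N : ℕ) : Monotone (FN lam N) := by
  intro x y hxy
  have h : 0 ≤ FN lam N y - FN lam N x := by
    rw [FN_diff]
    exact intervalIntegral.integral_nonneg hxy fun t _ => fR_nonneg hpd N t
  linarith

lemma FN_add_one (hpd : PD lam) (h0 : lam 0 = 1) {N : ℕ} (hN : 0 < N) (x : ℝ) :
    FN lam N (x + 1) = FN lam N x + 1 := by
  have h : (∫ t in x..(x + 1), fR lam N t) = 1 := by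
    have h2 := fR_coeff hpd hN (n := 0) (by simp [hN.le]) x
    simp only [eC_zero, one_mul, Int.natAbs_zero, Nat.sub_zero, h0, mul_one] at h2
    rw [div_self (by exact_mod_cast hN.ne')] at h2
    rw [intervalIntegral.integral_ofReal] at h2
    exact_mod_cast h2
  have := FN_diff lam N x (x + 1)
  linarith

lemma FN_add_int (hpd : PD lam) (h0 : lam 0 = 1) {N : ℕ} (hN : 0 < N) (x : ℝ) (k : ℤ) :
    FN lam N (x + k) = FN lam N x + k := by
  induction k using Int.induction_on with
  | zero => simp
  | succ m ih =>
      have := FN_add_one hpd h0 hN (x + m)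
      push_cast
      push_cast at ih
      rw [show x + (m + 1) = x + m + 1 by ring, this, ih]
      ring
  | pred m ih =>
      have := FN_add_one hpd h0 hN (x + (-m - 1))
      push_cast
      push_cast at ih
      rw [show x + (-m - 1) + 1 = x + -m by ring] at this
      rw [show x + (-(m:ℝ) - 1) = x + (-m - 1) by ring]
      linarith

lemma FN_bounds (hpd : PD lam) (h0 : lam 0 = 1) {N : ℕ} (hN : 0 < N) (x : ℝ) :
    x - 1 ≤ FN lam N x ∧ FN lam N x ≤ x + 1 := by
  have hx : x = Int.fract x + ⌊x⌋ := by rw [Int.fract]; ring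
  have h1 : FN lam N x = FN lam N (Int.fract x) + ⌊x⌋ := by
    conv_lhs => rw [hx]
    exact FN_add_int hpd h0 hN _ _
  have h2 : 0 ≤ FN lam N (Int.fract x) := by
    rw [← FN_zero lam N]
    exact FN_mono hpd N (Int.fract_nonneg x)
  have h3 : FN lam N (Int.fract x) ≤ 1 := by
    have : FN lam N 1 = 1 := by
      have := FN_add_one hpd h0 hN 0
      simpa [FN_zero] using this
    rw [← this]
    exact FN_mono hpd N (le_of_lt (Int.fract_lt_one x))
  have h4 := Int.floor_le x
  have h5 := Int.lt_floor_add_one x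
  constructor <;> linarith



variable {lam : ℤ → ℂ}

/-- A fixed ultrafilter extending `atTop` on `ℕ`. -/
def UF : Ultrafilter ℕ := Ultrafilter.of atTop

lemma UF_le : (UF : Filter ℕ) ≤ atTop := Ultrafilter.of_le _

lemma tendsto_FN (hpd : PD lam) (h0 : lam 0 = 1) (x : ℝ) :
    ∃ a, Tendsto (fun N => FN lam N x) (UF : Filter ℕ) (𝓝 a) := by
  have hmem : ∀ᶠ N in (UF : Filter ℕ), FN lam N x ∈ Icc (x - 1) (x + 1) := by
    filter_upwards [UF_le (eventually_ge_atTop 1)] with N hN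
    exact ⟨(FN_bounds hpd h0 hN x).1, (FN_bounds hpd h0 hN x).2⟩
  obtain ⟨a, -, ha⟩ := (isCompact_Icc (a := x - 1) (b := x + 1)).ultrafilter_le_nhds
    (UF.map (fun N => FN lam N x)) (le_principal_iff.mpr hmem)
  exact ⟨a, ha⟩

/-- The pointwise ultrafilter limit of the CDFs. -/
def Gf (hpd : PD lam) (h0 : lam 0 = 1) : ℝ → ℝ := fun x => (tendsto_FN hpd h0 x).choose

lemma Gf_tendsto (hpd : PD lam) (h0 : lam 0 = 1) (x : ℝ) :
    Tendsto (fun N => FN lam N x) (UF : Filter ℕ) (𝓝 (Gf hpd h0 x)) :=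
  (tendsto_FN hpd h0 x).choose_spec

lemma Gf_mono (hpd : PD lam) (h0 : lam 0 = 1) : Monotone (Gf hpd h0) := by
  intro x y hxy
  exact le_of_tendsto_of_tendsto' (Gf_tendsto hpd h0 x) (Gf_tendsto hpd h0 y)
    (fun N => FN_mono hpd N hxy)

lemma Gf_add_one (hpd : PD lam) (h0 : lam 0 = 1) (x : ℝ) :
    Gf hpd h0 (x + 1) = Gf hpd h0 x + 1 := by
  refine tendsto_nhds_unique (Gf_tendsto hpd h0 (x + 1)) ?_
  have : Tendsto (fun N => FN lam N x + 1) (UF : Filter ℕ) (𝓝 (Gf hpd h0 x + 1)) :=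
    (Gf_tendsto hpd h0 x).add tendsto_const_nhds
  refine this.congr' ?_
  filter_upwards [UF_le (eventually_ge_atTop 1)] with N hN
  exact (FN_add_one hpd h0 hN x).symm

/-- The right-continuous regularization, as a Stieltjes function. -/
def Ff (hpd : PD lam) (h0 : lam 0 = 1) : StieltjesFunction ℝ :=
  (Gf_mono hpd h0).stieltjesFunction

lemma Ff_eq_of_continuousAt (hpd : PD lam) (h0 : lam 0 = 1) {x : ℝ}
    (h : ContinuousAt (Gf hpd h0) x) : Ff hpd h0 x = Gf hpd h0 x := by
  rw [Ff, Monotone.stieltjesFunction_eq]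
  exact rightLim_eq_of_tendsto h.continuousWithinAt

lemma Ff_add_one (hpd : PD lam) (h0 : lam 0 = 1) (x : ℝ) :
    Ff hpd h0 (x + 1) = Ff hpd h0 x + 1 := by
  rw [Ff, Monotone.stieltjesFunction_eq, Monotone.stieltjesFunction_eq]
  have h1 : Tendsto (fun t : ℝ => t - 1) (𝓝[>] (x + 1)) (𝓝[>] x) := by
    rw [tendsto_nhdsWithin_iff]
    constructor
    · have : Tendsto (fun t : ℝ => t - 1) (𝓝 (x + 1)) (𝓝 x) := by
        simpa using (tendsto_id (x := 𝓝 (x+1))).sub_const (1 : ℝ)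
      exact this.mono_left nhdsWithin_le_nhds
    · filter_upwards [self_mem_nhdsWithin] with t ht
      simp only [mem_Ioi] at ht ⊢
      linarith
  have h2 : Tendsto (Gf hpd h0) (𝓝[>] (x + 1)) (𝓝 (rightLim (Gf hpd h0) x + 1)) := by
    have h3 := ((Gf_mono hpd h0).tendsto_rightLim x).comp h1
    have h4 : Tendsto (fun t : ℝ => Gf hpd h0 (t - 1) + 1) (𝓝[>] (x + 1))
        (𝓝 (rightLim (Gf hpd h0) x + 1)) := h3.add tendsto_const_nhds
    refine h4.congr fun t => ?_
    rw [← Gf_add_one hpd h0 (t - 1)]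
    ring_nf
  exact rightLim_eq_of_tendsto h2

lemma exists_t0 (hpd : PD lam) (h0 : lam 0 = 1) :
    ∃ t₀ : ℝ, ∀ q : ℚ, ContinuousAt (Gf hpd h0) (t₀ + q) := by
  have hD : {x | ¬ContinuousAt (Gf hpd h0) x}.Countable :=
    (Gf_mono hpd h0).countable_not_continuousAt
  have hBad : (⋃ q : ℚ, (fun x : ℝ => x + (q : ℝ)) ⁻¹'
      {x | ¬ContinuousAt (Gf hpd h0) x}).Countable :=
    countable_iUnion fun q => hD.preimage (add_left_injective _)
  have hne : (⋃ q : ℚ, (fun x : ℝ => x + (q : ℝ)) ⁻¹'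
      {x | ¬ContinuousAt (Gf hpd h0) x}) ≠ univ := by
    intro h
    rw [h] at hBad
    exact Cardinal.not_countable_real hBad
  obtain ⟨t₀, ht₀⟩ := (ne_univ_iff_exists_notMem _).mp hne
  refine ⟨t₀, fun q => ?_⟩
  by_contra hc
  exact ht₀ (mem_iUnion.mpr ⟨q, hc⟩)

/-- The Herglotz measure on the circle. -/
def mu (hpd : PD lam) (h0 : lam 0 = 1) (t₀ : ℝ) : Measure (AddCircle (1 : ℝ)) :=
  ((Ff hpd h0).measure.restrict (Ioc t₀ (t₀ + 1))).map (fun x : ℝ => (x : AddCircle (1 : ℝ)))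

lemma measurable_mk' : Measurable (fun x : ℝ => (x : AddCircle (1 : ℝ))) :=
  AddCircle.measurable_mk'

lemma mu_prob (hpd : PD lam) (h0 : lam 0 = 1) (t₀ : ℝ) :
    IsProbabilityMeasure (mu hpd h0 t₀) := by
  constructor
  rw [mu, Measure.map_apply measurable_mk' MeasurableSet.univ, preimage_univ,
    Measure.restrict_apply_univ, StieltjesFunction.measure_Ioc, Ff_add_one hpd h0 t₀]
  norm_num

lemma mu_integral (hpd : PD lam) (h0 : lam 0 = 1) (t₀ : ℝ) (n : ℤ) :
    (∫ t : AddCircle (1 : ℝ), fourier n t ∂(mu hpd h0 t₀))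
      = ∫ x in Ioc t₀ (t₀ + 1), eC n x ∂(Ff hpd h0).measure := by
  rw [mu, integral_map measurable_mk'.aemeasurable
    ((map_continuous (fourier n)).aestronglyMeasurable)]
  refine integral_congr_ae (Eventually.of_forall fun x => ?_)
  show (fourier n) (x : AddCircle (1:ℝ)) = eC n x
  rw [fourier_coe_apply]
  simp [eC]



lemma stieltjes_integrableOn (F : StieltjesFunction ℝ) {g : ℝ → ℂ} (hg : Continuous g)
    (hgb : ∀ x, ‖g x‖ ≤ 1) (a b : ℝ) : IntegrableOn g (Ioc a b) F.measure := by
  refine Measure.integrableOn_of_bounded (M := 1) ?_ hg.aestronglyMeasurable ?_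
  · rw [StieltjesFunction.measure_Ioc]
    exact ENNReal.ofReal_ne_top
  · exact Eventually.of_forall hgb

lemma stieltjes_toReal_Ioc (F : StieltjesFunction ℝ) {a b : ℝ} (hab : a ≤ b) :
    (F.measure (Ioc a b)).toReal = F b - F a := by
  rw [StieltjesFunction.measure_Ioc, ENNReal.toReal_ofReal (by linarith [F.mono hab])]

lemma norm_setIntegral_piece (F : StieltjesFunction ℝ) {a b : ℝ} (hab : a ≤ b) {g : ℝ → ℂ}
    (hg : Continuous g) (hgb : ∀ x, ‖g x‖ ≤ 1) {c : ℂ} {ε : ℝ}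
    (hbound : ∀ x ∈ Ioc a b, ‖g x - c‖ ≤ ε) :
    ‖(∫ x in Ioc a b, g x ∂F.measure) - c * (F b - F a)‖ ≤ ε * (F b - F a) := by
  have hc : c * (F b - F a) = ∫ _ in Ioc a b, c ∂F.measure := by
    rw [setIntegral_const, measureReal_def, stieltjes_toReal_Ioc F hab, Complex.real_smul]
    push_cast
    ring
  rw [hc, ← integral_sub (stieltjes_integrableOn F hg hgb a b)
    ((integrableOn_const_iff (C := c)).mpr (Or.inr (by
      rw [StieltjesFunction.measure_Ioc]; exact ENNReal.ofReal_lt_top)))]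
  have := norm_setIntegral_le_of_norm_le_const (μ := F.measure) (s := Ioc a b)
    (f := fun x => g x - c) (C := ε)
    (by rw [StieltjesFunction.measure_Ioc]; exact ENNReal.ofReal_lt_top) hbound
  calc ‖∫ x in Ioc a b, (g x - c) ∂F.measure‖ ≤ ε * (F.measure (Ioc a b)).toReal := this
    _ = ε * (F b - F a) := by rw [stieltjes_toReal_Ioc F hab]

lemma setIntegral_Ioc_split (F : StieltjesFunction ℝ) {g : ℝ → ℂ} (hg : Continuous g)
    (hgb : ∀ x, ‖g x‖ ≤ 1) (s : ℕ → ℝ) (hs : Monotone s) (m : ℕ) :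
    (∫ x in Ioc (s 0) (s m), g x ∂F.measure)
      = ∑ i ∈ Finset.range m, ∫ x in Ioc (s i) (s (i + 1)), g x ∂F.measure := by
  induction m with
  | zero => simp
  | succ k ih =>
      rw [Finset.sum_range_succ, ← ih]
      have hunion : Ioc (s 0) (s k) ∪ Ioc (s k) (s (k + 1)) = Ioc (s 0) (s (k + 1)) :=
        Ioc_union_Ioc_eq_Ioc (hs (Nat.zero_le k)) (hs (Nat.le_succ k))
      rw [← hunion, setIntegral_union ?hd measurableSet_Ioc
        (stieltjes_integrableOn F hg hgb _ _) (stieltjes_integrableOn F hg hgb _ _)]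
      case hd => exact Set.Ioc_disjoint_Ioc_of_le le_rfl



lemma norm_intervalIntegral_piece (hpd : PD lam) (N : ℕ) {a b : ℝ} (hab : a ≤ b) (n : ℤ)
    {c : ℂ} {ε : ℝ} (hbound : ∀ x ∈ Icc a b, ‖eC n x - c‖ ≤ ε) :
    ‖(∫ t in a..b, eC n t * (fR lam N t : ℂ)) - c * ((FN lam N b - FN lam N a : ℝ) : ℂ)‖
      ≤ ε * (FN lam N b - FN lam N a) := by
  have hint : ∀ d : ℂ, IntervalIntegrable (fun t => d * (fR lam N t : ℂ)) volume a b :=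
    fun d => (continuous_const.mul
      (Complex.continuous_ofReal.comp (fR_continuous lam N))).intervalIntegrable _ _
  have hint1 : IntervalIntegrable (fun t => eC n t * (fR lam N t : ℂ)) volume a b :=
    ((eC_continuous n).mul
      (Complex.continuous_ofReal.comp (fR_continuous lam N))).intervalIntegrable _ _
  have h1 : c * ((FN lam N b - FN lam N a : ℝ) : ℂ)
      = ∫ t in a..b, c * (fR lam N t : ℂ) := by
    rw [FN_diff, ← intervalIntegral.integral_ofReal, ← intervalIntegral.integral_const_mul]
  rw [h1, ← intervalIntegral.integral_sub hint1 (hint c)]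
  have h2 : ∀ t : ℝ, eC n t * (fR lam N t : ℂ) - c * (fR lam N t : ℂ)
      = (eC n t - c) * (fR lam N t : ℂ) := fun t => by ring
  simp only [h2]
  calc ‖∫ t in a..b, (eC n t - c) * (fR lam N t : ℂ)‖
      ≤ ∫ t in a..b, ‖(eC n t - c) * (fR lam N t : ℂ)‖ :=
        intervalIntegral.norm_integral_le_integral_norm hab
    _ ≤ ∫ t in a..b, ε * fR lam N t := by
        refine intervalIntegral.integral_mono_on hab ?_ ?_ ?_
        · exact (((eC_continuous n).sub continuous_const).mul
            (Complex.continuous_ofReal.comp (fR_continuous lam N))).norm.intervalIntegrable _ _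
        · exact (continuous_const.mul (fR_continuous lam N)).intervalIntegrable _ _
        · intro x hx
          rw [norm_mul, Complex.norm_real, Real.norm_eq_abs,
            _root_.abs_of_nonneg (fR_nonneg hpd N x)]
          exact mul_le_mul_of_nonneg_right (hbound x hx) (fR_nonneg hpd N x)
    _ = ε * (FN lam N b - FN lam N a) := by
        rw [intervalIntegral.integral_const_mul, ← FN_diff]

theorem key_integral (hpd : PD lam) (h0 : lam 0 = 1) (t₀ : ℝ)
    (hcont : ∀ q : ℚ, ContinuousAt (Gf hpd h0) (t₀ + q)) (n : ℤ) :
    (∫ x in Ioc t₀ (t₀ + 1), eC n x ∂(Ff hpd h0).measure) = lam n := by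
  set F := Ff hpd h0 with hFdef
  set G := Gf hpd h0 with hGdef
  set I := ∫ x in Ioc t₀ (t₀ + 1), eC n x ∂F.measure with hIdef
  have hband : ∀ x : ℝ, ‖eC n x‖ ≤ 1 := fun x => le_of_eq (eC_norm n x)
  suffices h : ∀ ε : ℝ, 0 < ε → ‖lam n - I‖ ≤ 4 * ε by
    have h0' : ‖lam n - I‖ ≤ 0 := by
      by_contra hc
      push_neg at hc
      have := h (‖lam n - I‖ / 8) (by linarith)
      linarith
    have : lam n - I = 0 := by
      rwa [← norm_le_zero_iff]
    rw [hIdef] at this ⊢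
    exact (sub_eq_zero.mp this).symm
  intro ε hε
  -- uniform continuity of eC n on a compact neighborhood
  obtain ⟨δ, hδ, hδ'⟩ := (Metric.uniformContinuousOn_iff_le.mp
    ((isCompact_Icc (a := t₀ - 1) (b := t₀ + 2)).uniformContinuousOn_of_continuous
      (eC_continuous n).continuousOn)) ε hε
  obtain ⟨m, hm⟩ := exists_nat_gt (1 / δ)
  have hm0 : 0 < m := by
    by_contra hc
    push_neg at hc
    interval_cases m
    · simp at hm
      linarith [one_div_pos.mpr hδ]
  have hmR : 0 < (m : ℝ) := Nat.cast_pos.mpr hm0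
  have hmesh : 1 / (m : ℝ) ≤ δ := by
    rw [div_le_iff₀ hmR]
    rw [div_lt_iff₀ hδ] at hm
    nlinarith
  set s : ℕ → ℝ := fun i => t₀ + i / m with hsdef
  have hs0 : s 0 = t₀ := by simp [hsdef]
  have hsm : s m = t₀ + 1 := by
    simp only [hsdef]
    rw [div_self hmR.ne']
  have hsmono : Monotone s := by
    intro i j hij
    simp only [hsdef]
    have : (i : ℝ) ≤ j := Nat.cast_le.mpr hij
    gcongr
  have hgap : ∀ i : ℕ, s (i + 1) - s i = 1 / m := by
    intro i
    simp only [hsdef]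
    push_cast
    field_simp
    ring
  have hsK : ∀ i ≤ m, s i ∈ Icc (t₀ - 1) (t₀ + 2) := by
    intro i hi
    simp only [hsdef, mem_Icc]
    have h1 : 0 ≤ (i : ℝ) / m := by positivity
    have h2 : (i : ℝ) / m ≤ 1 := by
      rw [div_le_one hmR]
      exact_mod_cast hi
    constructor <;> linarith
  have hFG : ∀ i ≤ m, F (s i) = G (s i) := by
    intro i hi
    apply Ff_eq_of_continuousAt
    have : s i = t₀ + ((i / m : ℚ) : ℝ) := by
      simp only [hsdef]
      push_cast
      ring
    rw [this]
    exact hcont _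
  -- oscillation bound on each piece
  have hosc : ∀ i < m, ∀ x ∈ Icc (s i) (s (i + 1)), ‖eC n x - eC n (s i)‖ ≤ ε := by
    intro i hi x hx
    have hxK : x ∈ Icc (t₀ - 1) (t₀ + 2) := by
      have h1 := hsK i hi.le
      have h2 := hsK (i + 1) hi
      simp only [mem_Icc] at *
      constructor <;> [linarith [hx.1]; linarith [hx.2]]
    have hsiK := hsK i hi.le
    have hdist : dist x (s i) ≤ δ := by
      rw [Real.dist_eq, _root_.abs_of_nonneg (by linarith [hx.1] : (0:ℝ) ≤ x - s i)]
      have := hgap i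
      have := hx.2
      calc x - s i ≤ s (i + 1) - s i := by linarith
        _ = 1 / m := hgap i
        _ ≤ δ := hmesh
    have := hδ' x hxK (s i) hsiK hdist
    rwa [dist_eq_norm] at this
  -- the partition sum with F
  set A : ℂ := ∑ i ∈ Finset.range m, eC n (s i) * ((F (s (i + 1)) - F (s i) : ℝ) : ℂ) with hAdef
  -- ν-side estimate : ‖I - A‖ ≤ ε
  have hIA : ‖I - A‖ ≤ ε := by
    have hsplit : I = ∑ i ∈ Finset.range m,
        ∫ x in Ioc (s i) (s (i + 1)), eC n x ∂F.measure := by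
      rw [hIdef, ← hsm, ← hs0]
      exact setIntegral_Ioc_split F (eC_continuous n) hband s hsmono m
    rw [hsplit, hAdef, ← Finset.sum_sub_distrib]
    calc ‖∑ i ∈ Finset.range m, ((∫ x in Ioc (s i) (s (i + 1)), eC n x ∂F.measure)
            - eC n (s i) * ((F (s (i + 1)) - F (s i) : ℝ) : ℂ))‖
        ≤ ∑ i ∈ Finset.range m, ‖(∫ x in Ioc (s i) (s (i + 1)), eC n x ∂F.measure)
            - eC n (s i) * ((F (s (i + 1)) - F (s i) : ℝ) : ℂ)‖ := norm_sum_le _ _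
      _ ≤ ∑ i ∈ Finset.range m, ε * (F (s (i + 1)) - F (s i)) := by
          refine Finset.sum_le_sum fun i hi => ?_
          have hi' := Finset.mem_range.mp hi
          have hb := norm_setIntegral_piece F (hsmono (Nat.le_succ i)) (eC_continuous n)
            hband (c := eC n (s i)) (ε := ε)
            (fun x hx => hosc i hi' x (Ioc_subset_Icc_self hx))
          have hcast : ((F (s (i+1)) : ℝ) : ℂ) - ((F (s i) : ℝ) : ℂ)
              = ((F (s (i + 1)) - F (s i) : ℝ) : ℂ) := by push_cast; ring
          calc ‖(∫ x in Ioc (s i) (s (i + 1)), eC n x ∂F.measure)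
                - eC n (s i) * ((F (s (i + 1)) - F (s i) : ℝ) : ℂ)‖
              = ‖(∫ x in Ioc (s i) (s (i + 1)), eC n x ∂F.measure)
                - eC n (s i) * (((F (s (i+1)) : ℝ) : ℂ) - ((F (s i) : ℝ) : ℂ))‖ := by
                rw [hcast]
            _ ≤ ε * (F (s (i + 1)) - F (s i)) := hb
      _ = ε * (F (t₀ + 1) - F t₀) := by
          rw [← Finset.mul_sum, Finset.sum_range_sub (fun i => F (s i)), hs0, hsm]
      _ = ε := by rw [Ff_add_one hpd h0 t₀]; ring
  -- the fN side : for suitable N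
  have hBN : ∀ N : ℕ, 0 < N → n.natAbs ≤ N →
      ‖(((N - n.natAbs : ℕ) : ℂ) / N) * lam n
        - ∑ i ∈ Finset.range m, eC n (s i) * ((FN lam N (s (i+1)) - FN lam N (s i) : ℝ) : ℂ)‖
      ≤ ε := by
    intro N hN hn
    have hcoeff := fR_coeff hpd hN hn t₀
    have hintN : ∀ i : ℕ, IntervalIntegrable (fun t => eC n t * (fR lam N t : ℂ))
        volume (s i) (s (i + 1)) :=
      fun i => ((eC_continuous n).mul
        (Complex.continuous_ofReal.comp (fR_continuous lam N))).intervalIntegrable _ _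
    have hsplit2 : (∫ t in t₀..(t₀ + 1), eC n t * (fR lam N t : ℂ))
        = ∑ i ∈ Finset.range m, ∫ t in (s i)..(s (i + 1)), eC n t * (fR lam N t : ℂ) := by
      rw [← hsm, ← hs0]
      exact (intervalIntegral.sum_integral_adjacent_intervals fun i _ => hintN i).symm
    rw [← hcoeff, hsplit2, ← Finset.sum_sub_distrib]
    calc ‖∑ i ∈ Finset.range m, ((∫ t in (s i)..(s (i + 1)), eC n t * (fR lam N t : ℂ))
            - eC n (s i) * ((FN lam N (s (i+1)) - FN lam N (s i) : ℝ) : ℂ))‖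
        ≤ ∑ i ∈ Finset.range m, ‖(∫ t in (s i)..(s (i + 1)), eC n t * (fR lam N t : ℂ))
            - eC n (s i) * ((FN lam N (s (i+1)) - FN lam N (s i) : ℝ) : ℂ)‖ := norm_sum_le _ _
      _ ≤ ∑ i ∈ Finset.range m, ε * (FN lam N (s (i+1)) - FN lam N (s i)) := by
          refine Finset.sum_le_sum fun i hi => ?_
          exact norm_intervalIntegral_piece hpd N (hsmono (Nat.le_succ i)) n
            (fun x hx => hosc i (Finset.mem_range.mp hi) x hx)
      _ = ε * (FN lam N (t₀ + 1) - FN lam N t₀) := by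
          rw [← Finset.mul_sum, Finset.sum_range_sub (fun i => FN lam N (s i)), hs0, hsm]
      _ = ε := by rw [FN_add_one hpd h0 hN]; ring
  -- convergence of the partition sums
  have htendsto : Tendsto (fun N => ∑ i ∈ Finset.range m,
      eC n (s i) * ((FN lam N (s (i+1)) - FN lam N (s i) : ℝ) : ℂ)) (UF : Filter ℕ) (𝓝 A) := by
    have hA2 : A = ∑ i ∈ Finset.range m,
        eC n (s i) * ((G (s (i + 1)) - G (s i) : ℝ) : ℂ) := by
      rw [hAdef]
      refine Finset.sum_congr rfl fun i hi => ?_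
      have hi' := Finset.mem_range.mp hi
      rw [hFG i hi'.le, hFG (i + 1) hi']
    rw [hA2]
    refine tendsto_finset_sum _ fun i _ => ?_
    have h1 : Tendsto (fun N => FN lam N (s (i+1)) - FN lam N (s i)) (UF : Filter ℕ)
        (𝓝 (G (s (i+1)) - G (s i))) :=
      (Gf_tendsto hpd h0 (s (i+1))).sub (Gf_tendsto hpd h0 (s i))
    have h2 : Tendsto (fun x : ℝ => eC n (s i) * ((x : ℝ) : ℂ)) (𝓝 (G (s (i+1)) - G (s i)))
        (𝓝 (eC n (s i) * ((G (s (i+1)) - G (s i) : ℝ) : ℂ))) :=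
      ((continuous_const.mul Complex.continuous_ofReal).tendsto _)
    exact h2.comp h1
  have hABev : ∀ᶠ N in (UF : Filter ℕ), ‖(∑ i ∈ Finset.range m,
      eC n (s i) * ((FN lam N (s (i+1)) - FN lam N (s i) : ℝ) : ℂ)) - A‖ ≤ ε := by
    have := Metric.tendsto_nhds.mp htendsto ε hε
    filter_upwards [this] with N hN
    rw [dist_eq_norm] at hN
    exact hN.le
  -- the coefficient converges to lam n
  have hcoefev : ∀ᶠ N in (UF : Filter ℕ),
      ‖lam n - (((N - n.natAbs : ℕ) : ℂ) / N) * lam n‖ ≤ ε := by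
    have hto : Tendsto (fun N : ℕ => (n.natAbs : ℝ) / N * ‖lam n‖) atTop (𝓝 0) := by
      have := (tendsto_const_div_atTop_nhds_zero_nat (n.natAbs : ℝ)).mul_const ‖lam n‖
      simpa using this
    have hev : ∀ᶠ N in atTop, ‖lam n - (((N - n.natAbs : ℕ) : ℂ) / N) * lam n‖ ≤ ε := by
      have h1 := Metric.tendsto_nhds.mp hto ε hε
      filter_upwards [h1, eventually_ge_atTop (max 1 n.natAbs)] with N hN1 hN2
      have hge1 : 1 ≤ N := le_trans (le_max_left _ _) hN2
      have hgeA : n.natAbs ≤ N := le_trans (le_max_right _ _) hN2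
      have hNne : (N : ℂ) ≠ 0 := Nat.cast_ne_zero.mpr (by omega)
      have hcast : ((N - n.natAbs : ℕ) : ℂ) = (N : ℂ) - n.natAbs := by
        push_cast [Nat.cast_sub hgeA]
        ring
      have heq : lam n - (((N - n.natAbs : ℕ) : ℂ) / N) * lam n
          = ((n.natAbs : ℂ) / N) * lam n := by
        rw [hcast]
        field_simp
        ring
      rw [heq, norm_mul]
      have : ‖(n.natAbs : ℂ) / N‖ = (n.natAbs : ℝ) / N := by
        rw [norm_div]
        norm_num
      rw [this]
      rw [Real.dist_eq, sub_zero] at hN1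
      calc (n.natAbs : ℝ) / N * ‖lam n‖ ≤ |(n.natAbs : ℝ) / N * ‖lam n‖| := le_abs_self _
        _ ≤ ε := hN1.le
    exact UF_le hev
  -- put everything together
  have hNev : ∀ᶠ N in (UF : Filter ℕ), 0 < N ∧ n.natAbs ≤ N := by
    refine UF_le ?_
    filter_upwards [eventually_ge_atTop (max 1 n.natAbs)] with N hN
    exact ⟨lt_of_lt_of_le Nat.zero_lt_one (le_trans (le_max_left _ _) hN),
      le_trans (le_max_right _ _) hN⟩
  obtain ⟨N, ⟨hNpos, hNabs⟩, hAB, hcoefN⟩ := (hNev.and (hABev.and hcoefev)).exists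
  set c : ℂ := (((N - n.natAbs : ℕ) : ℂ) / N) * lam n with hcdef
  set B : ℂ := ∑ i ∈ Finset.range m,
    eC n (s i) * ((FN lam N (s (i+1)) - FN lam N (s i) : ℝ) : ℂ) with hBdef
  have hsum : lam n - I = (lam n - c) + ((c - B) + ((B - A) + (A - I))) := by ring
  have hAI : ‖A - I‖ ≤ ε := by rw [norm_sub_rev]; exact hIA
  calc ‖lam n - I‖ = ‖(lam n - c) + ((c - B) + ((B - A) + (A - I)))‖ := by rw [← hsum]
    _ ≤ ‖lam n - c‖ + (‖c - B‖ + (‖B - A‖ + ‖A - I‖)) := by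
        refine le_trans (norm_add_le _ _) ?_
        gcongr
        refine le_trans (norm_add_le _ _) ?_
        gcongr
        exact norm_add_le _ _
    _ ≤ ε + (ε + (ε + ε)) := by
        gcongr <;> first
          | exact hcoefN
          | exact hBN N hNpos hNabs
          | exact hAB
          | exact hAI
    _ = 4 * ε := by ring


end HerglotzAux
end

open Matrix Complex MeasureTheory
open scoped ComplexOrder

/-- Bochner–Herglotz theorem for ℤ: a positive definite function `λ : ℤ → ℂ` with
`λ(0) = 1` is the Fourier transform of a probability measure on the circle 𝕋 = ℝ/ℤ. -/
theorem herglotz_int (lam : ℤ → ℂ)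
    (hpd : ∀ (K : ℕ) (n : Fin K → ℤ) (c : Fin K → ℂ),
      0 ≤ ∑ j, ∑ l, lam (n j - n l) * c j * star (c l))
    (h0 : lam 0 = 1) :
    ∃ μ : Measure (AddCircle (1 : ℝ)), IsProbabilityMeasure μ ∧
      ∀ n : ℤ, lam n = ∫ t : AddCircle (1 : ℝ), fourier n t ∂μ := by
  have hpd' : HerglotzAux.PD lam := hpd
  obtain ⟨t₀, ht₀⟩ := HerglotzAux.exists_t0 hpd' h0
  refine ⟨HerglotzAux.mu hpd' h0 t₀, HerglotzAux.mu_prob hpd' h0 t₀, fun n => ?_⟩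
  rw [HerglotzAux.mu_integral hpd' h0 t₀ n]
  exact (HerglotzAux.key_integral hpd' h0 t₀ ht₀ n).symm
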